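/- Let μ > 0, σ > 0, γ > 0 with γ ≠ 1, and λ ∈ [0, μ). Suppose the discriminant D := (γ−1)(μ²−λ²)/(γσ⁴) − (1/2 − μ/σ²)² is strictly negative, set a = √(−D) and b = 1/2 − μ/σ² + (γ−1)(μ−λ)/(γσ²), and assume |b| < a. Then the function w(y) = ( a·tanh( artanh(b/a) − a·y ) + (μ/σ² − 1/2) ) / (γ−1) is differentiable on all of ℝ and satisfies, for every y ∈ ℝ, the Riccati equation w'(y) + (1−γ)·w(y)² + (2μ/σ² − 1)·w(y) − (μ²−λ²)/(γσ⁴) = 0, together with the initial condition w(0) = (μ−λ)/(γσ²). -/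

import Mathlib

/-- Real inverse hyperbolic tangent on (-1,1). -/
noncomputable def artanh (x : ℝ) : ℝ := (1 / 2) * Real.log ((1 + x) / (1 - x))

lemma hasDerivAt_tanh' (x : ℝ) :
    HasDerivAt Real.tanh (1 - Real.tanh x ^ 2) x := by
  have hc : Real.cosh x ≠ 0 := ne_of_gt (Real.cosh_pos x)
  have h := (Real.hasDerivAt_sinh x).div (Real.hasDerivAt_cosh x) hc
  have hfun : (Real.sinh / Real.cosh) = Real.tanh := by
    funext y; rw [Pi.div_apply, Real.tanh_eq_sinh_div_cosh]
  rw [hfun] at h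
  refine h.congr_deriv ?_
  have hid := Real.cosh_sq_sub_sinh_sq x
  rw [Real.tanh_eq_sinh_div_cosh]
  field_simp

lemma tanh_artanh (x : ℝ) (h : |x| < 1) : Real.tanh (artanh x) = x := by
  have h1 : -1 < x := (abs_lt.mp h).1
  have h2 : x < 1 := (abs_lt.mp h).2
  have hp : 0 < 1 + x := by linarith
  have hm : 0 < 1 - x := by linarith
  set t := artanh x with ht
  have hu2 : Real.exp t ^ 2 = (1 + x) / (1 - x) := by
    have : Real.exp t ^ 2 = Real.exp (2 * t) := by
      rw [← Real.exp_nat_mul]; norm_num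
    rw [this, ht, artanh]
    rw [show 2 * ((1:ℝ) / 2 * Real.log ((1 + x) / (1 - x))) =
        Real.log ((1 + x) / (1 - x)) by ring]
    exact Real.exp_log (div_pos hp hm)
  have hu : 0 < Real.exp t := Real.exp_pos t
  rw [Real.tanh_eq_sinh_div_cosh, Real.sinh_eq, Real.cosh_eq, Real.exp_neg]
  have hden : Real.exp t + (Real.exp t)⁻¹ ≠ 0 := by positivity
  have he : Real.exp t ≠ 0 := ne_of_gt hu
  have h3 : Real.exp t ^ 2 * (1 - x) = 1 + x := by
    rw [hu2]; field_simp
  rw [div_div_div_eq, div_eq_iff (by positivity)]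
  field_simp
  nlinarith [h3]

/-- The hyperbolic-tangent formula solves the Riccati ODE
`w' + (1-γ)w² + (2μ/σ² - 1)w - (μ²-λ²)/(γσ⁴) = 0` with `w 0 = (μ-λ)/(γσ²)`,
in the case of negative discriminant with `|b| < a`. -/
theorem riccati_tanh_solution
    (μ σ γ lam : ℝ) (hμ : 0 < μ) (hσ : 0 < σ) (hγ : 0 < γ) (hγ1 : γ ≠ 1)
    (hlam : lam ∈ Set.Ico 0 μ)
    (hD : (γ - 1) * (μ ^ 2 - lam ^ 2) / (γ * σ ^ 4) - (1 / 2 - μ / σ ^ 2) ^ 2 < 0)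
    (a b : ℝ)
    (ha : a = Real.sqrt
      (-((γ - 1) * (μ ^ 2 - lam ^ 2) / (γ * σ ^ 4) - (1 / 2 - μ / σ ^ 2) ^ 2)))
    (hb : b = 1 / 2 - μ / σ ^ 2 + (γ - 1) * (μ - lam) / (γ * σ ^ 2))
    (hba : |b| < a)
    (w : ℝ → ℝ)
    (hw : w = fun y : ℝ =>
      (a * Real.tanh (artanh (b / a) - a * y) + (μ / σ ^ 2 - 1 / 2)) / (γ - 1)) :
    Differentiable ℝ w ∧
    (∀ y : ℝ,
      deriv w y + (1 - γ) * (w y) ^ 2 + (2 * μ / σ ^ 2 - 1) * w y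
        - (μ ^ 2 - lam ^ 2) / (γ * σ ^ 4) = 0) ∧
    w 0 = (μ - lam) / (γ * σ ^ 2) := by
  have hγ1' : γ - 1 ≠ 0 := sub_ne_zero.mpr hγ1
  have hapos : 0 < a := lt_of_le_of_lt (abs_nonneg b) hba
  have ha2 : a ^ 2 = -((γ - 1) * (μ ^ 2 - lam ^ 2) / (γ * σ ^ 4)
      - (1 / 2 - μ / σ ^ 2) ^ 2) := by
    rw [ha, Real.sq_sqrt (by linarith)]
  -- derivative of w
  have hder : ∀ y : ℝ, HasDerivAt w
      (-(a ^ 2) * (1 - Real.tanh (artanh (b / a) - a * y) ^ 2) / (γ - 1)) y := by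
    intro y
    have hinner : HasDerivAt (fun y : ℝ => artanh (b / a) - a * y) (-a) y := by
      simpa using ((hasDerivAt_id y).const_mul a).const_sub (artanh (b / a))
    have h1 := (hasDerivAt_tanh' (artanh (b / a) - a * y)).comp y hinner
    have h2 := ((h1.const_mul a).add_const (μ / σ ^ 2 - 1 / 2)).div_const (γ - 1)
    rw [hw]
    refine h2.congr_deriv ?_
    ring
  constructor
  · intro y; exact (hder y).differentiableAt
  constructor
  · intro y
    have hdy := (hder y).deriv
    set T := Real.tanh (artanh (b / a) - a * y) with hT
    have hwy : w y = (a * T + (μ / σ ^ 2 - 1 / 2)) / (γ - 1) := by rw [hw]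
    rw [hdy, hwy]
    have hσ2 : σ ^ 2 ≠ 0 := by positivity
    have hσ4 : σ ^ 4 ≠ 0 := by positivity
    have hγ0 : γ ≠ 0 := ne_of_gt hγ
    have hKform : (μ ^ 2 - lam ^ 2) / (γ * σ ^ 4)
        = ((μ / σ ^ 2 - 1 / 2) ^ 2 - a ^ 2) / (γ - 1) := by
      rw [ha2]; field_simp; ring
    rw [hKform]
    field_simp
    ring
  · have hba1 : |b / a| < 1 := by
      rw [abs_div, abs_of_pos hapos, div_lt_one hapos]; exact hba
    have := tanh_artanh (b / a) hba1
    rw [hw]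
    simp only [mul_zero, sub_zero]
    rw [this, mul_div_cancel₀ _ (ne_of_gt hapos), hb]
    field_simp
    ring
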